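/- Let Γ be an algebraic 2-irreflexive hypergraph of arity 3 on ℝ^d and A ⊆ ℝ. Then ε(A, x) = 0 if and only if D(A, x) = {x}. -/

import Mathlib

open MvPolynomial Filter Metric
open scoped ENNReal NNReal

noncomputable section

/-- `A ⊆ ℝ^d` is (real) algebraic: the zero set of a real polynomial in `d` variables. -/
def IsAlgSet {d : ℕ} (A : Set (Fin d → ℝ)) : Prop :=
  ∃ p : MvPolynomial (Fin d) ℝ, A = {z | MvPolynomial.eval z p = 0}

/-- An algebraic set is irreducible if whenever it is a union of two algebraic sets,
one of them is the whole set. -/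
def IsIrredAlgSet {d : ℕ} (A : Set (Fin d → ℝ)) : Prop :=
  IsAlgSet A ∧ ∀ B C : Set (Fin d → ℝ), IsAlgSet B → IsAlgSet C → A = B ∪ C → B = A ∨ C = A

/-- `F`-semialgebraic subsets of `ℝ^d`: the sets definable in the ordered field `ℝ`
with parameters from `F` (presented, via quantifier elimination for real closed fields,
as the closure of sign conditions of polynomials over `ℤ[F]` under boolean operations
and projections/existential quantification). -/
inductive IsSemialg (F : Set ℝ) : (d : ℕ) → Set (Fin d → ℝ) → Prop
  | zero {d} (p : MvPolynomial (Fin d) ℝ) (hp : ∀ m, MvPolynomial.coeff m p ∈ Subring.closure F) :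
      IsSemialg F d {x | MvPolynomial.eval x p = 0}
  | lt {d} (p : MvPolynomial (Fin d) ℝ) (hp : ∀ m, MvPolynomial.coeff m p ∈ Subring.closure F) :
      IsSemialg F d {x | 0 < MvPolynomial.eval x p}
  | compl {d} {s : Set (Fin d → ℝ)} : IsSemialg F d s → IsSemialg F d sᶜ
  | inter {d} {s t : Set (Fin d → ℝ)} : IsSemialg F d s → IsSemialg F d t → IsSemialg F d (s ∩ t)
  | proj {d} {s : Set (Fin (d+1) → ℝ)} : IsSemialg F (d+1) s →
      IsSemialg F d {x | ∃ y : ℝ, Fin.snoc x y ∈ s}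

/-- `D(F, x)`: the smallest `F`-semialgebraic set containing `x` which is algebraic
(by the Hilbert basis theorem the intersection below is itself such a set, i.e. realizes
the smallest one). -/
def Dset {d : ℕ} (F : Set ℝ) (x : Fin d → ℝ) : Set (Fin d → ℝ) :=
  ⋂₀ {A | IsAlgSet A ∧ IsSemialg F d A ∧ x ∈ A}

/-- A hypergraph `Γ` (of arity ≤ 3) on `ℝ^d` is 2-irreflexive: no 2-element set is in the
Vietoris (Hausdorff-metric) closure of `Γ` in the space of nonempty sets of size ≤ 3. -/
def TwoIrreflexive {d : ℕ} (Γ : Set (Set (EuclideanSpace ℝ (Fin d)))) : Prop :=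
  ¬ ∃ x y : EuclideanSpace ℝ (Fin d), x ≠ y ∧
    ∃ e : ℕ → Set (EuclideanSpace ℝ (Fin d)), (∀ n, e n ∈ Γ) ∧
      Filter.Tendsto (fun n => Metric.hausdorffDist (e n) {x, y}) Filter.atTop (nhds 0)

/-- `Γ` is an algebraic hypergraph of arity 3: hyperedges have exactly 3 elements and each
section `{y : b ∪ {y} ∈ Γ} ∪ b` (for finite `b`) is an algebraic set. -/
def IsAlgHypergraph {d : ℕ} (Γ : Set (Set (EuclideanSpace ℝ (Fin d)))) : Prop :=
  (∀ e ∈ Γ, e.encard = 3) ∧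
  ∀ b : Set (EuclideanSpace ℝ (Fin d)), b.Finite → IsAlgSet (WithLp.ofLp '' ({y : EuclideanSpace ℝ (Fin d) | insert y b ∈ Γ} ∪ b))

/-- `ε` witnesses the defining property of `ε(A, x)`: there is no set `b` of points at
distance `< ε` from `x` such that `b ∪ {y} ∈ Γ` for every `y ∈ D(A,x) \ ({x} ∪ b)`. -/
def epsGood {d : ℕ} (Γ : Set (Set (EuclideanSpace ℝ (Fin d)))) (A : Set ℝ)
    (x : EuclideanSpace ℝ (Fin d)) (ε : ℝ) : Prop :=
  ¬ ∃ b : Set (EuclideanSpace ℝ (Fin d)), (∀ z ∈ b, dist z x < ε) ∧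
    ∀ y, y ∈ Dset A x → WithLp.toLp 2 y ≠ x → WithLp.toLp 2 y ∉ b → insert (WithLp.toLp 2 y) b ∈ Γ

/-- `ε(A, x)` as an extended nonnegative real: the supremum of the good `ε > 0`
(`0` if there are none, `∞` if they are unbounded). -/
def epsVal {d : ℕ} (Γ : Set (Set (EuclideanSpace ℝ (Fin d)))) (A : Set ℝ)
    (x : EuclideanSpace ℝ (Fin d)) : ℝ≥0∞ :=
  sSup (ENNReal.ofReal '' {ε : ℝ | 0 < ε ∧ epsGood Γ A x ε})

theorem epsVal_eq_zero_iff (d : ℕ) (Γ : Set (Set (EuclideanSpace ℝ (Fin d))))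
    (hΓ : IsAlgHypergraph Γ) (h2 : TwoIrreflexive Γ) (A : Set ℝ)
    (x : EuclideanSpace ℝ (Fin d)) :
    epsVal Γ A x = 0 ↔ Dset A x = {x.ofLp} := by
  constructor
  · intro h0
    by_contra hD
    have hxD : x.ofLp ∈ Dset A x := fun S hS => hS.2.2
    obtain ⟨y₀, hy₀D, hy₀x⟩ :
        ∃ y₀ : EuclideanSpace ℝ (Fin d), y₀.ofLp ∈ Dset A x ∧ y₀ ≠ x := by
      by_contra h
      push_neg at h
      exact hD (Set.Subset.antisymm (fun y hy => by rw [Set.mem_singleton_iff, ← h (WithLp.toLp 2 y) hy]) (Set.singleton_subset_iff.mpr hxD))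
    have hδpos : 0 < dist y₀ x := dist_pos.mpr hy₀x
    have hng : ∀ n : ℕ, ¬ epsGood Γ A x (dist y₀ x / (n + 1)) := by
      intro n hg
      have hεpos : (0:ℝ) < dist y₀ x / (n + 1) := by positivity
      have hle : ENNReal.ofReal (dist y₀ x / (n + 1)) ≤ epsVal Γ A x :=
        le_sSup ⟨dist y₀ x / (n + 1), ⟨hεpos, hg⟩, rfl⟩
      rw [h0, le_zero_iff, ENNReal.ofReal_eq_zero] at hle
      linarith
    choose b hbdist hbsec using fun n => not_not.mp (hng n)
    have hεle : ∀ n : ℕ, dist y₀ x / (n + 1) ≤ dist y₀ x := fun n =>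
      div_le_self hδpos.le (by linarith [Nat.cast_nonneg (α := ℝ) n])
    have hy₀b : ∀ n, y₀ ∉ b n := by
      intro n hmem
      have h1 := hbdist n y₀ hmem
      have h2 := hεle n
      linarith
    have hedge : ∀ n, insert y₀ (b n) ∈ Γ := fun n =>
      hbsec n y₀.ofLp hy₀D hy₀x (hy₀b n)
    have hbne : ∀ n, (b n).Nonempty := by
      intro n
      rw [Set.nonempty_iff_ne_empty]
      intro hemp
      have h3 := hΓ.1 _ (hedge n)
      rw [hemp] at h3; simp [Set.encard_insert_of_notMem] at h3
    refine h2 ⟨y₀, x, hy₀x, fun n => insert y₀ (b n), hedge, ?_⟩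
    have hbound : ∀ n : ℕ,
        hausdorffDist (insert y₀ (b n)) {y₀, x} ≤ dist y₀ x / (n + 1) := by
      intro n
      refine Metric.hausdorffDist_le_of_mem_dist (by positivity) ?_ ?_
      · intro a ha
        rcases Set.mem_insert_iff.mp ha with h | hab
        · refine ⟨y₀, by simp, ?_⟩
          rw [h, dist_self]
          positivity
        · exact ⟨x, by simp, (hbdist n a hab).le⟩
      · intro c hc
        rcases Set.mem_insert_iff.mp hc with h | h
        · refine ⟨y₀, Set.mem_insert _ _, ?_⟩
          rw [h, dist_self]
          positivity
        · obtain ⟨z₀, hz₀⟩ := hbne n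
          rw [Set.mem_singleton_iff] at h
          refine ⟨z₀, Set.mem_insert_of_mem _ hz₀, ?_⟩
          rw [h, dist_comm]
          exact (hbdist n z₀ hz₀).le
    have hlim : Tendsto (fun n : ℕ => dist y₀ x / (n + 1)) atTop (nhds 0) := by
      have h4 := (tendsto_one_div_add_atTop_nhds_zero_nat).const_mul (dist y₀ x)
      simpa [div_eq_mul_inv, one_div] using h4
    exact squeeze_zero (fun n => Metric.hausdorffDist_nonneg) hbound hlim
  · intro hD
    have hempty : {ε : ℝ | 0 < ε ∧ epsGood Γ A x ε} = ∅ := by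
      ext ε
      simp only [Set.mem_setOf_eq, Set.mem_empty_iff_false, iff_false, not_and]
      intro _ hg
      exact hg ⟨∅, by simp, fun y hyD hyx _ => (hyx (by rw [hD, Set.mem_singleton_iff] at hyD; rw [hyD])).elim⟩
    simp [epsVal, hempty]
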